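/- The τ-expectile is monotone: if X ≤ Z almost surely for square-integrable random variables X and Z, then the τ-expectile of X is at most the τ-expectile of Z. -/

import Mathlib

open MeasureTheory Set

/-- Monotonicity of the τ-expectile: if X ≤ Z almost surely and q, r satisfy
the first-order conditions characterizing the τ-expectiles of X and Z respectively, then
q ≤ r. -/
theorem expectile_monotone
    {Ω : Type*} [MeasurableSpace Ω] (μ : Measure Ω) [IsProbabilityMeasure μ]
    (τ : ℝ) (hτ : τ ∈ Set.Ioo (0 : ℝ) 1)
    (X Z : Ω → ℝ) (hX : MemLp X 2 μ) (hZ : MemLp Z 2 μ)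
    (hle : ∀ᵐ ω ∂μ, X ω ≤ Z ω) (q r : ℝ)
    (hq : τ * ∫ ω, max (X ω - q) 0 ∂μ = (1 - τ) * ∫ ω, max (q - X ω) 0 ∂μ)
    (hr : τ * ∫ ω, max (Z ω - r) 0 ∂μ = (1 - τ) * ∫ ω, max (r - Z ω) 0 ∂μ) :
    q ≤ r := by
  obtain ⟨hτ0, hτ1⟩ := hτ
  by_contra hqr
  push_neg at hqr
  have hτ' : 0 < 1 - τ := by linarith
  set m := min τ (1 - τ) with hm
  have hm1 : m ≤ τ := min_le_left _ _
  have hm2 : m ≤ 1 - τ := min_le_right _ _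
  have hmpos : 0 < m := lt_min hτ0 hτ'
  set c := m * (q - r) with hcdef
  have hc : 0 < c := mul_pos hmpos (by linarith)
  have hXi : Integrable X μ := hX.integrable one_le_two
  have hZi : Integrable Z μ := hZ.integrable one_le_two
  have intX : ∀ t : ℝ, Integrable (fun ω => max (X ω - t) 0) μ := fun t =>
    (hXi.sub (integrable_const t)).pos_part
  have intX' : ∀ t : ℝ, Integrable (fun ω => max (t - X ω) 0) μ := fun t =>
    ((integrable_const t).sub hXi).pos_part
  have intZ : ∀ t : ℝ, Integrable (fun ω => max (Z ω - t) 0) μ := fun t =>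
    (hZi.sub (integrable_const t)).pos_part
  have intZ' : ∀ t : ℝ, Integrable (fun ω => max (t - Z ω) 0) μ := fun t =>
    ((integrable_const t).sub hZi).pos_part
  have intAX : ∀ t : ℝ,
      Integrable (fun ω => τ * max (X ω - t) 0 - (1 - τ) * max (t - X ω) 0) μ := fun t =>
    ((intX t).const_mul τ).sub ((intX' t).const_mul (1 - τ))
  have intAZ : ∀ t : ℝ,
      Integrable (fun ω => τ * max (Z ω - t) 0 - (1 - τ) * max (t - Z ω) 0) μ := fun t =>
    ((intZ t).const_mul τ).sub ((intZ' t).const_mul (1 - τ))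
  have iAX : ∀ t : ℝ, ∫ ω, (τ * max (X ω - t) 0 - (1 - τ) * max (t - X ω) 0) ∂μ
      = τ * ∫ ω, max (X ω - t) 0 ∂μ - (1 - τ) * ∫ ω, max (t - X ω) 0 ∂μ := by
    intro t
    rw [integral_sub ((intX t).const_mul τ) ((intX' t).const_mul (1 - τ)),
      integral_const_mul, integral_const_mul]
  have iAZ : ∫ ω, (τ * max (Z ω - r) 0 - (1 - τ) * max (r - Z ω) 0) ∂μ
      = τ * ∫ ω, max (Z ω - r) 0 ∂μ - (1 - τ) * ∫ ω, max (r - Z ω) 0 ∂μ := by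
    rw [integral_sub ((intZ r).const_mul τ) ((intZ' r).const_mul (1 - τ)),
      integral_const_mul, integral_const_mul]
  -- Key pointwise inequality in x for the "gap" between the criterion at r and at q
  have key : ∀ x : ℝ, c + (τ * max (x - q) 0 - (1 - τ) * max (q - x) 0)
      ≤ τ * max (x - r) 0 - (1 - τ) * max (r - x) 0 := by
    intro x
    rcases le_total x r with h1 | h1
    · rw [max_eq_right (by linarith : x - r ≤ 0), max_eq_left (by linarith : 0 ≤ r - x),
        max_eq_right (by linarith : x - q ≤ 0), max_eq_left (by linarith : 0 ≤ q - x)]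
      nlinarith
    · rcases le_total x q with h2 | h2
      · rw [max_eq_left (by linarith : 0 ≤ x - r), max_eq_right (by linarith : r - x ≤ 0),
          max_eq_right (by linarith : x - q ≤ 0), max_eq_left (by linarith : 0 ≤ q - x)]
        nlinarith
      · rw [max_eq_left (by linarith : 0 ≤ x - r), max_eq_right (by linarith : r - x ≤ 0),
          max_eq_left (by linarith : 0 ≤ x - q), max_eq_right (by linarith : q - x ≤ 0)]
        nlinarith
  -- Integrate the key inequality
  have step1 : c + ∫ ω, (τ * max (X ω - q) 0 - (1 - τ) * max (q - X ω) 0) ∂μ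
      ≤ ∫ ω, (τ * max (X ω - r) 0 - (1 - τ) * max (r - X ω) 0) ∂μ := by
    have := integral_mono ((integrable_const c).add (intAX q)) (intAX r)
      (fun ω => key (X ω))
    simp only [Pi.add_apply] at this
    rwa [integral_add (integrable_const c) (intAX q), integral_const, probReal_univ,
      one_smul] at this
  -- Monotonicity in the random variable
  have step2 : ∫ ω, (τ * max (X ω - r) 0 - (1 - τ) * max (r - X ω) 0) ∂μ
      ≤ ∫ ω, (τ * max (Z ω - r) 0 - (1 - τ) * max (r - Z ω) 0) ∂μ := by
    refine integral_mono_ae (intAX r) (intAZ r) ?_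
    filter_upwards [hle] with ω hω
    have h1 : max (X ω - r) 0 ≤ max (Z ω - r) 0 :=
      max_le_max (by linarith) le_rfl
    have h2 : max (r - Z ω) 0 ≤ max (r - X ω) 0 :=
      max_le_max (by linarith) le_rfl
    nlinarith
  have e1 : ∫ ω, (τ * max (X ω - q) 0 - (1 - τ) * max (q - X ω) 0) ∂μ = 0 := by
    rw [iAX q]; linarith
  have e2 : ∫ ω, (τ * max (Z ω - r) 0 - (1 - τ) * max (r - Z ω) 0) ∂μ = 0 := by
    rw [iAZ]; linarith
  rw [e1] at step1
  rw [e2] at step2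
  linarith
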